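/- Let H be a Hopf algebra and B a left s-unital partial H-module algebra. If M is a unital left (underlined) B#H-module, then M becomes a partial (B,H)-module via the induced B-action a·m = (a#1_H)▷m and the H-action hm = Σ (h₁·x)#h₂ ▷ m, where x ∈ B satisfies xm = m. Conversely, every partial (B,H)-module is a unital (underlined) B#H-module via Σ a(h₁·b)#h₂ ▷ m = a(h·(bm)). -/
import Mathlib


open TensorProduct

section PartialHopfPrelude

variable (k : Type) [Field k] (H : Type) [Ring H] [HopfAlgebra k H]

/-- Sweedler-style sum `Σ f h₁ h₂` over the comultiplication of `h`. -/
noncomputable def sweedler {M : Type} [AddCommGroup M] [Module k M]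
    (f : H →ₗ[k] H →ₗ[k] M) (h : H) : M :=
  TensorProduct.lift f (Coalgebra.comul h)

variable {A : Type} [AddCommGroup A] [Module k A]

/-- `Σ (h₁ · a) * (h₂ g · b)`, with an explicit multiplication `mA` on `A`. -/
noncomputable def paRhs (mA : A →ₗ[k] A →ₗ[k] A) (act : H →ₗ[k] A →ₗ[k] A)
    (h g : H) (a b : A) : A :=
  sweedler k H ((mA.comp (act.flip a)).compl₂ ((act.flip b).comp (LinearMap.mulRight k g))) h

/-- `Σ (h₁ g · b) * (h₂ · a)`, with an explicit multiplication `mA` on `A`. -/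
noncomputable def paSymmRhs (mA : A →ₗ[k] A →ₗ[k] A) (act : H →ₗ[k] A →ₗ[k] A)
    (h g : H) (a b : A) : A :=
  sweedler k H ((mA.comp ((act.flip b).comp (LinearMap.mulRight k g))).compl₂ (act.flip a)) h

/-- A (left) partial action of the Hopf algebra `H` on `A`, where the (possibly nonunital,
possibly nonassociative) multiplication of `A` is given explicitly as a bilinear map `mA`:
`1_H · a = a` and `h · (a (g · b)) = Σ (h₁ · a)(h₂ g · b)`. -/
structure IsPartialActionOn (mA : A →ₗ[k] A →ₗ[k] A) (act : H →ₗ[k] A →ₗ[k] A) : Prop where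
  one_act : ∀ a : A, act 1 a = a
  act_assoc : ∀ (h g : H) (a b : A), act h (mA a (act g b)) = paRhs k H mA act h g a b

/-- A symmetrical partial action: additionally `h · ((g · b) a) = Σ (h₁ g · b)(h₂ · a)`. -/
structure IsSymmPartialActionOn (mA : A →ₗ[k] A →ₗ[k] A) (act : H →ₗ[k] A →ₗ[k] A)
    extends IsPartialActionOn k H mA act : Prop where
  act_symm : ∀ (h g : H) (a b : A), act h (mA (act g b) a) = paSymmRhs k H mA act h g a b

variable {B : Type} [NonUnitalRing B] [Module k B] [SMulCommClass k B B] [IsScalarTower k B B]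

/-- A partial action of `H` on the nonunital algebra `B` (with its own multiplication). -/
def IsPartialAction (act : H →ₗ[k] B →ₗ[k] B) : Prop :=
  IsPartialActionOn k H (LinearMap.mul k B) act

/-- A symmetrical partial action of `H` on the nonunital algebra `B`. -/
def IsSymmPartialAction (act : H →ₗ[k] B →ₗ[k] B) : Prop :=
  IsSymmPartialActionOn k H (LinearMap.mul k B) act

end PartialHopfPrelude

section Stmt9

variable {k : Type} [Field k] {H : Type} [Ring H] [HopfAlgebra k H]
variable {B : Type} [NonUnitalRing B] [Module k B] [SMulCommClass k B B] [IsScalarTower k B B]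

/-- `Σ a (h₁ · b) ⊗ (h₂ g)`, the smash product multiplication on elementary tensors. -/
noncomputable def smashAux (act : H →ₗ[k] B →ₗ[k] B) (a : B) (h : H) (b : B) (g : H) :
    B ⊗[k] H :=
  TensorProduct.map ((LinearMap.mulLeft k a).comp (act.flip b)) (LinearMap.mulRight k g)
    (Coalgebra.comul h)

/-- `Σ (h₁ · a) ((h₂ g) m)` for a left `B`-action `σ` and `H`-action `χ` on `M`. -/
noncomputable def pbhRhs {M : Type} [AddCommGroup M] [Module k M]
    (act : H →ₗ[k] B →ₗ[k] B) (σ : B →ₗ[k] M →ₗ[k] M) (χ : H →ₗ[k] M →ₗ[k] M)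
    (h g : H) (a : B) (m : M) : M :=
  sweedler k H ((σ.comp (act.flip a)).compl₂
    ((χ.flip m).comp (LinearMap.mulRight k g))) h


set_option synthInstance.maxHeartbeats 1000000
namespace SPSM

theorem common_unit {B : Type} [NonUnitalRing B] (hsu : ∀ b : B, ∃ x : B, x * b = b) (a b : B) :
    ∃ e : B, e * a = a ∧ e * b = b := by
  obtain ⟨e₁, h1⟩ := hsu a
  obtain ⟨e₂, h2⟩ := hsu (b - e₁ * b)
  refine ⟨e₁ + e₂ - e₂ * e₁, ?_, ?_⟩
  · rw [sub_mul, add_mul, mul_assoc, h1]; abel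
  · rw [sub_mul, add_mul, mul_assoc, add_sub_assoc, ← mul_sub, h2]; abel

variable (act : H →ₗ[k] B →ₗ[k] B)

/-- `w h x = Σ (h₁ · x) ⊗ h₂`. -/
noncomputable def w (h : H) (x : B) : B ⊗[k] H :=
  TensorProduct.map (act.flip x) LinearMap.id (Coalgebra.comul h)

variable {act}
variable (hpa : IsPartialActionOn k H (LinearMap.mul k B) act)
variable {μ : (B ⊗[k] H) →ₗ[k] (B ⊗[k] H) →ₗ[k] (B ⊗[k] H)}
variable (hμ : ∀ (a : B) (h : H) (b : B) (g : H),
      μ (a ⊗ₜ[k] h) (b ⊗ₜ[k] g) = smashAux act a h b g)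

include hpa

theorem act_mul (u : H) (e b : B) :
    act u (e * b) =
      TensorProduct.lift (((LinearMap.mul k B).comp (act.flip e)).compl₂ (act.flip b))
        (Coalgebra.comul (R := k) u) := by
  have := hpa.act_assoc u 1 e b
  rw [hpa.one_act] at this
  simp only [LinearMap.mul_apply'] at this
  rw [this, paRhs, sweedler, LinearMap.mulRight_one, LinearMap.comp_id]

include hμ

theorem mu_one_left (a : B) (z : B ⊗[k] H) :
    μ (a ⊗ₜ[k] (1 : H)) z = TensorProduct.map (LinearMap.mulLeft k a) LinearMap.id z := by
  induction z using TensorProduct.induction_on with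
  | zero => simp
  | tmul b g =>
      rw [hμ, smashAux, Bialgebra.comul_one, Algebra.TensorProduct.one_def]
      simp [hpa.one_act]
  | add z₁ z₂ ih₁ ih₂ => simp [ih₁, ih₂]

theorem mu_smash_left (h : H) (e b : B) (g : H) :
    μ (w act h e) (b ⊗ₜ[k] g) =
      TensorProduct.map (act.flip (e * b)) (LinearMap.mulRight k g)
        (Coalgebra.comul (R := k) h) := by
  set m₂ : H →ₗ[k] H →ₗ[k] B :=
    ((LinearMap.mul k B).comp (act.flip e)).compl₂ (act.flip b) with hm₂
  set f : (H ⊗[k] H) ⊗[k] H →ₗ[k] B ⊗[k] H :=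
    TensorProduct.map (TensorProduct.lift m₂) (LinearMap.mulRight k g) with hf
  have step1 : ∀ z : H ⊗[k] H,
      μ (TensorProduct.map (act.flip e) LinearMap.id z) (b ⊗ₜ[k] g) =
        f ((TensorProduct.assoc k H H H).symm
          ((Coalgebra.comul (R := k)).lTensor H z)) := by
    intro z
    induction z using TensorProduct.induction_on with
    | zero => simp
    | tmul u t =>
        rw [map_tmul, LinearMap.id_coe, id_eq, hμ, smashAux, LinearMap.lTensor_tmul]
        have inner : ∀ y : H ⊗[k] H,
            TensorProduct.map ((LinearMap.mulLeft k (act u e)).comp (act.flip b))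
              (LinearMap.mulRight k g) y =
            f ((TensorProduct.assoc k H H H).symm (u ⊗ₜ[k] y)) := by
          intro y
          induction y using TensorProduct.induction_on with
          | zero => simp
          | tmul v s =>
              simp [hf, hm₂, TensorProduct.assoc_symm_tmul]
          | add y₁ y₂ ih₁ ih₂ => simp [tmul_add, ih₁, ih₂]
        exact inner _
    | add z₁ z₂ ih₁ ih₂ => simp [ih₁, ih₂]
  have step2 : ∀ z : H ⊗[k] H,
      TensorProduct.map (act.flip (e * b)) (LinearMap.mulRight k g) z =
        f ((Coalgebra.comul (R := k)).rTensor H z) := by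
    intro z
    induction z using TensorProduct.induction_on with
    | zero => simp
    | tmul u t =>
        rw [map_tmul, LinearMap.flip_apply, act_mul hpa, LinearMap.rTensor_tmul, hf, map_tmul]
    | add z₁ z₂ ih₁ ih₂ => simp [ih₁, ih₂]
  rw [w, step1, Coalgebra.coassoc_symm_apply, ← step2]

omit hμ in
theorem w_one (x : B) : w act (1 : H) x = x ⊗ₜ[k] (1 : H) := by
  rw [w, Bialgebra.comul_one, Algebra.TensorProduct.one_def, map_tmul]
  simp [hpa.one_act]

theorem mu_smash_unit (h : H) {e x : B} (hex : e * x = x) :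
    μ (w act h e) (x ⊗ₜ[k] (1 : H)) = w act h x := by
  rw [mu_smash_left hpa hμ, hex, LinearMap.mulRight_one, w]


omit [Ring H] [HopfAlgebra k H] hpa hμ in
omit [Ring H] [HopfAlgebra k H] hpa hμ in
theorem mul_eq_mulLeft (c : B) : (LinearMap.mul k B) c = LinearMap.mulLeft k c := by
  ext b; simp

section Law3

variable (act) (a x : B)

/-- `q12' z u t = Σ ((u·a) * ((t₁ z¹)·x)) ⊗ (t₂ z²)`. -/
noncomputable def q12' (z : H ⊗[k] H) : H →ₗ[k] H →ₗ[k] B ⊗[k] H :=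
  ((LinearMap.rTensorHom H).comp ((LinearMap.mul k B).comp (act.flip a))).compl₂
    ((TensorProduct.map (act.flip x) LinearMap.id).comp
      ((LinearMap.mulRight k z).comp Coalgebra.comul))

omit hpa hμ in
theorem lift_zero'' {N : Type} [AddCommGroup N] [Module k N] :
    TensorProduct.lift (0 : H →ₗ[k] H →ₗ[k] N) = 0 := by
  ext u t; simp

omit hpa hμ in
theorem lift_add'' {N : Type} [AddCommGroup N] [Module k N] (f g : H →ₗ[k] H →ₗ[k] N) :
    TensorProduct.lift (f + g) = TensorProduct.lift f + TensorProduct.lift g := by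
  ext u t; simp

omit hpa hμ in
theorem map_map'' {X Y Z W : Type} [AddCommGroup X] [Module k X] [AddCommGroup Y] [Module k Y]
    [AddCommGroup Z] [Module k Z] [AddCommGroup W] [Module k W]
    (f : Y →ₗ[k] Z) (g : X →ₗ[k] Y) (y : X ⊗[k] W) :
    TensorProduct.map f LinearMap.id (TensorProduct.map g LinearMap.id y) =
      TensorProduct.map (f.comp g) LinearMap.id y := by
  induction y using TensorProduct.induction_on with
  | zero => simp
  | tmul p q => simp
  | add y₁ y₂ ih₁ ih₂ => simp [ih₁, ih₂]

omit hpa hμ in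
theorem q12'_apply (z : H ⊗[k] H) (u t : H) :
    q12' act a x z u t =
      TensorProduct.map ((LinearMap.mulLeft k (act u a)).comp (act.flip x)) LinearMap.id
        (Coalgebra.comul (R := k) t * z) := by
  have hr : (LinearMap.rTensorHom (R := k) (N := B) (P := B) H) ((LinearMap.mul k B) (act u a))
      = TensorProduct.map (LinearMap.mulLeft k (act u a)) LinearMap.id := by
    rw [mul_eq_mulLeft]; rfl
  rw [q12', LinearMap.compl₂_apply, LinearMap.comp_apply, LinearMap.comp_apply,
    LinearMap.comp_apply, LinearMap.comp_apply, LinearMap.flip_apply, hr,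
    LinearMap.mulRight_apply, map_map'']

omit hpa hμ in
theorem q12'_zero : q12' act a x (0 : H ⊗[k] H) = 0 := by
  ext u t
  simp [q12'_apply]

omit hpa hμ in
theorem q12'_add (z₁ z₂ : H ⊗[k] H) :
    q12' act a x (z₁ + z₂) = q12' act a x z₁ + q12' act a x z₂ := by
  ext u t
  simp [q12'_apply, mul_add]

variable {act a x}

omit hμ in
theorem subclaim_coassoc (h g₁ g₂ : H) :
    TensorProduct.map (act.flip (a * act g₁ x)) (LinearMap.mulRight k g₂)
        (Coalgebra.comul (R := k) h) =
      TensorProduct.lift (q12' act a x (g₁ ⊗ₜ[k] g₂)) (Coalgebra.comul (R := k) h) := by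
  set p₂ : H →ₗ[k] H →ₗ[k] B :=
    ((LinearMap.mul k B).comp (act.flip a)).compl₂
      ((act.flip x).comp (LinearMap.mulRight k g₁)) with hp₂
  set f12 : (H ⊗[k] H) ⊗[k] H →ₗ[k] B ⊗[k] H :=
    TensorProduct.map (TensorProduct.lift p₂) (LinearMap.mulRight k g₂) with hf12
  have sA : ∀ zh : H ⊗[k] H,
      TensorProduct.map (act.flip (a * act g₁ x)) (LinearMap.mulRight k g₂) zh =
        f12 ((Coalgebra.comul (R := k)).rTensor H zh) := by
    intro zh
    induction zh using TensorProduct.induction_on with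
    | zero => simp
    | tmul u t =>
        have hu : act u (a * act g₁ x) = TensorProduct.lift p₂ (Coalgebra.comul (R := k) u) := by
          have := hpa.act_assoc u g₁ a x
          simp only [LinearMap.mul_apply'] at this
          rw [this]; rfl
        rw [map_tmul, LinearMap.flip_apply, hu, LinearMap.rTensor_tmul, hf12, map_tmul]
    | add z₁ z₂ ih₁ ih₂ => simp [ih₁, ih₂]
  have sB : ∀ zh : H ⊗[k] H,
      TensorProduct.lift (q12' act a x (g₁ ⊗ₜ[k] g₂)) zh =
        f12 ((TensorProduct.assoc k H H H).symm ((Coalgebra.comul (R := k)).lTensor H zh)) := by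
    intro zh
    induction zh using TensorProduct.induction_on with
    | zero => simp
    | tmul u t =>
        rw [lift.tmul, q12'_apply, LinearMap.lTensor_tmul]
        have inner : ∀ y : H ⊗[k] H,
            TensorProduct.map ((LinearMap.mulLeft k (act u a)).comp (act.flip x)) LinearMap.id
              (y * (g₁ ⊗ₜ[k] g₂)) =
            f12 ((TensorProduct.assoc k H H H).symm (u ⊗ₜ[k] y)) := by
          intro y
          induction y using TensorProduct.induction_on with
          | zero => simp
          | tmul v s =>
              rw [Algebra.TensorProduct.tmul_mul_tmul, map_tmul, TensorProduct.assoc_symm_tmul,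
                hf12, map_tmul]
              simp [hp₂]
          | add y₁ y₂ ih₁ ih₂ => simp [add_mul, tmul_add, ih₁, ih₂]
        exact inner _
    | add z₁ z₂ ih₁ ih₂ => simp [ih₁, ih₂]
  rw [sA, ← Coalgebra.coassoc_symm_apply, ← sB]

theorem claimA (h : H) {e : B} (hea : e * a = a) :
    ∀ zg : H ⊗[k] H,
      μ (w act h e) (TensorProduct.map ((LinearMap.mulLeft k a).comp (act.flip x))
          LinearMap.id zg) =
        TensorProduct.lift (q12' act a x zg) (Coalgebra.comul (R := k) h) := by
  intro zg
  induction zg using TensorProduct.induction_on with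
  | zero => simp [q12'_zero, lift_zero'']
  | tmul g₁ g₂ =>
      rw [map_tmul, LinearMap.comp_apply, LinearMap.id_coe, id_eq, LinearMap.flip_apply,
        LinearMap.mulLeft_apply, mu_smash_left hpa hμ, ← mul_assoc, hea,
        subclaim_coassoc hpa]
  | add z₁ z₂ ih₁ ih₂ => simp [q12'_add, lift_add'', ih₁, ih₂]

end Law3

section Part1

omit hpa hμ in
theorem w_add (h h' : H) (x : B) : w act (h + h') x = w act h x + w act h' x := by
  rw [w, w, w, map_add, map_add]

omit hpa hμ in
theorem w_smul (c : k) (h : H) (x : B) : w act (c • h) x = c • w act h x := by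
  rw [w, w, map_smul, map_smul]

theorem mu_one_one (x b : B) :
    μ (x ⊗ₜ[k] (1 : H)) (b ⊗ₜ[k] (1 : H)) = (x * b) ⊗ₜ[k] (1 : H) := by
  rw [mu_one_left hpa hμ]; simp

theorem mu_smash_one (a : B) (h : H) (b : B) :
    μ (a ⊗ₜ[k] h) (b ⊗ₜ[k] (1 : H)) = μ (a ⊗ₜ[k] (1 : H)) (w act h b) := by
  rw [hμ, smashAux, LinearMap.mulRight_one, mu_one_left hpa hμ, w, map_map'']

variable {M : Type} [AddCommGroup M] [Module k M]
variable {ρ : (B ⊗[k] H) →ₗ[k] M →ₗ[k] M}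
variable (hρ : ∀ (u v : B ⊗[k] H) (m : M), ρ (μ u v) m = ρ u (ρ v m))

include hρ

theorem unit_absorb {p e : B} {m : M} (hp : ρ (p ⊗ₜ[k] (1 : H)) m = m) (hep : e * p = p) :
    ρ (e ⊗ₜ[k] (1 : H)) m = m := by
  conv_lhs => rw [← hp]
  rw [← hρ, mu_one_one hpa hμ, hep, hp]

theorem span_B (P : Submodule k (B ⊗[k] H))
    (hP : P = Submodule.span k
      {x : B ⊗[k] H | ∃ (u : B ⊗[k] H) (b : B), x = μ u (b ⊗ₜ[k] (1 : H))})
    (hun : ∀ m : M, m ∈ Submodule.span k {x : M | ∃ p ∈ P, ∃ m' : M, x = ρ p m'}) :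
    ∀ m : M, m ∈ Submodule.span k
      {x : M | ∃ (b : B) (m' : M), x = ρ (b ⊗ₜ[k] (1 : H)) m'} := by
  set S' := Submodule.span k {x : M | ∃ (b : B) (m' : M), x = ρ (b ⊗ₜ[k] (1 : H)) m'} with hS'
  have key : ∀ (u : B ⊗[k] H) (b : B) (m' : M), ρ (μ u (b ⊗ₜ[k] (1 : H))) m' ∈ S' := by
    intro u b m'
    induction u using TensorProduct.induction_on with
    | zero => simp only [map_zero, LinearMap.zero_apply]; exact Submodule.zero_mem _
    | tmul a h =>
        rw [mu_smash_one hpa hμ, hρ]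
        exact Submodule.subset_span ⟨a, ρ (w act h b) m', rfl⟩
    | add u₁ u₂ ih₁ ih₂ =>
        simp only [map_add, LinearMap.add_apply]
        exact Submodule.add_mem _ ih₁ ih₂
  intro m
  have := hun m
  refine Submodule.span_le.mpr ?_ this
  rintro _ ⟨p, hp, m', rfl⟩
  rw [hP] at hp
  induction hp using Submodule.span_induction with
  | mem y hy => obtain ⟨u, b, rfl⟩ := hy; exact key u b m'
  | zero => simp only [map_zero, LinearMap.zero_apply]; exact Submodule.zero_mem _
  | add y z _ _ ihy ihz =>
      rw [map_add, LinearMap.add_apply]; exact Submodule.add_mem _ ihy ihz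
  | smul c y _ ihy =>
      rw [map_smul, LinearMap.smul_apply]; exact Submodule.smul_mem _ _ ihy

theorem local_unit (hsu : ∀ b : B, ∃ x : B, x * b = b)
    (P : Submodule k (B ⊗[k] H))
    (hP : P = Submodule.span k
      {x : B ⊗[k] H | ∃ (u : B ⊗[k] H) (b : B), x = μ u (b ⊗ₜ[k] (1 : H))})
    (hun : ∀ m : M, m ∈ Submodule.span k {x : M | ∃ p ∈ P, ∃ m' : M, x = ρ p m'}) :
    ∀ m : M, ∃ x : B, ρ (x ⊗ₜ[k] (1 : H)) m = m := by
  have hB := span_B hpa hμ hρ P hP hun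
  intro m
  have hm := hB m
  induction hm using Submodule.span_induction with
  | mem y hy =>
      obtain ⟨b, m', rfl⟩ := hy
      obtain ⟨x, hx⟩ := hsu b
      exact ⟨x, by rw [← hρ, mu_one_one hpa hμ, hx]⟩
  | zero => exact ⟨0, by simp⟩
  | add y z _ _ ihy ihz =>
      obtain ⟨p, hp⟩ := ihy
      obtain ⟨q, hq⟩ := ihz
      obtain ⟨e, hep, heq⟩ := common_unit hsu p q
      refine ⟨e, ?_⟩
      rw [map_add, unit_absorb hpa hμ hρ hp hep, unit_absorb hpa hμ hρ hq heq]
  | smul c y _ ihy =>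
      obtain ⟨p, hp⟩ := ihy
      exact ⟨p, by rw [map_smul, hp]⟩

theorem chi_wd (hsu : ∀ b : B, ∃ x : B, x * b = b)
    (hloc : ∀ m : M, ∃ x : B, ρ (x ⊗ₜ[k] (1 : H)) m = m)
    (h : H) (m : M) {x : B} (hx : ρ (x ⊗ₜ[k] (1 : H)) m = m) :
    ρ (w act h (hloc m).choose) m = ρ (w act h x) m := by
  have hy : ρ ((hloc m).choose ⊗ₜ[k] (1 : H)) m = m := (hloc m).choose_spec
  obtain ⟨e, hex, hey⟩ := common_unit hsu x (hloc m).choose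
  have h1 : ρ (w act h x) m = ρ (w act h e) m := by
    rw [← mu_smash_unit hpa hμ h hex, hρ, hx]
  have h2 : ρ (w act h (hloc m).choose) m = ρ (w act h e) m := by
    rw [← mu_smash_unit hpa hμ h hey, hρ, hy]
  rw [h1, h2]

end Part1
end SPSM

/-- Let `B` be a left s-unital partial `H`-module algebra, with smash
product multiplication `μ` on `B ⊗ H` and partial smash product
`P = span {μ u (b ⊗ 1)}`.  (1) Every unital left `P`-module `M` becomes a partial
`(B,H)`-module via `b·m = (b ⊗ 1) ▷ m` and `h m = (Σ (h₁·x) ⊗ h₂) ▷ m` whenever `x m = m`;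
(2) conversely every partial `(B,H)`-module is a unital `P`-module. -/
theorem sUnital_partial_smash_modules
    (act : H →ₗ[k] B →ₗ[k] B) (hpa : IsPartialAction k H act)
    (hsu : ∀ b : B, ∃ x : B, x * b = b)
    (μ : (B ⊗[k] H) →ₗ[k] (B ⊗[k] H) →ₗ[k] (B ⊗[k] H))
    (hμ : ∀ (a : B) (h : H) (b : B) (g : H),
      μ (a ⊗ₜ[k] h) (b ⊗ₜ[k] g) = smashAux act a h b g)
    (P : Submodule k (B ⊗[k] H))
    (hP : P = Submodule.span k
      {x : B ⊗[k] H | ∃ (u : B ⊗[k] H) (b : B), x = μ u (b ⊗ₜ[k] (1 : H))})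
    (M : Type) [AddCommGroup M] [Module k M] :
    -- (1) unital `P`-modules are partial `(B,H)`-modules
    (∀ ρ : (B ⊗[k] H) →ₗ[k] M →ₗ[k] M,
      (∀ (u v : B ⊗[k] H) (m : M), ρ (μ u v) m = ρ u (ρ v m)) →
      (∀ m : M, m ∈ Submodule.span k {x : M | ∃ p ∈ P, ∃ m' : M, x = ρ p m'}) →
      -- the induced `B`-module structure is unital
      (∀ m : M, m ∈ Submodule.span k
          {x : M | ∃ (b : B) (m' : M), x = ρ (b ⊗ₜ[k] (1 : H)) m'}) ∧
      -- and there is an `H`-action making `M` a partial `(B,H)`-module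
      ∃ χ : H →ₗ[k] M →ₗ[k] M,
        (∀ (h : H) (m : M) (x : B), ρ (x ⊗ₜ[k] (1 : H)) m = m →
          χ h m = ρ (TensorProduct.map (act.flip x) LinearMap.id (Coalgebra.comul h)) m) ∧
        (∀ m : M, χ 1 m = m) ∧
        (∀ (h g : H) (a : B) (m : M),
          χ h (ρ (a ⊗ₜ[k] (1 : H)) (χ g m)) =
            pbhRhs act (ρ.comp ((TensorProduct.mk k B H).flip 1)) χ h g a m)) ∧
    -- (2) partial `(B,H)`-modules are unital `P`-modules
    (∀ (σ : B →ₗ[k] M →ₗ[k] M) (χ : H →ₗ[k] M →ₗ[k] M),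
      (∀ (b c : B) (m : M), σ (b * c) m = σ b (σ c m)) →
      (∀ m : M, m ∈ Submodule.span k {x : M | ∃ (b : B) (m' : M), x = σ b m'}) →
      (∀ m : M, χ 1 m = m) →
      (∀ (h g : H) (a : B) (m : M), χ h (σ a (χ g m)) = pbhRhs act σ χ h g a m) →
      ∃ ρ : (B ⊗[k] H) →ₗ[k] M →ₗ[k] M,
        (∀ (b : B) (h : H) (m : M), ρ (b ⊗ₜ[k] h) m = σ b (χ h m)) ∧
        (∀ (u v : B ⊗[k] H) (m : M), ρ (μ u v) m = ρ u (ρ v m)) ∧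
        (∀ m : M, m ∈ Submodule.span k {x : M | ∃ p ∈ P, ∃ m' : M, x = ρ p m'})) := by
  have hpa' : IsPartialActionOn k H (LinearMap.mul k B) act := hpa
  constructor
  · -- Part (1)
    intro ρ hρ hun
    have hB := SPSM.span_B hpa' hμ hρ P hP hun
    refine ⟨hB, ?_⟩
    have hloc : ∀ m : M, ∃ x : B, ρ (x ⊗ₜ[k] (1 : H)) m = m :=
      SPSM.local_unit hpa' hμ hρ hsu P hP hun
    have wd : ∀ (h : H) (m : M) (x : B), ρ (x ⊗ₜ[k] (1 : H)) m = m →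
        ρ (SPSM.w act h (hloc m).choose) m = ρ (SPSM.w act h x) m :=
      fun h m x hx => SPSM.chi_wd hpa' hμ hρ hsu hloc h m hx
    set χ : H →ₗ[k] M →ₗ[k] M := LinearMap.mk₂ k
      (fun h m => ρ (SPSM.w act h (hloc m).choose) m)
      (by
        intro h h' m
        beta_reduce
        rw [SPSM.w_add, map_add, LinearMap.add_apply])
      (by
        intro c h m
        beta_reduce
        rw [SPSM.w_smul, map_smul, LinearMap.smul_apply])
      (by
        intro h m m'
        beta_reduce
        obtain ⟨e, he1, he2⟩ :=
          SPSM.common_unit hsu (hloc m).choose (hloc m').choose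
        have hm : ρ (e ⊗ₜ[k] (1 : H)) m = m :=
          SPSM.unit_absorb hpa' hμ hρ (hloc m).choose_spec he1
        have hm' : ρ (e ⊗ₜ[k] (1 : H)) m' = m' :=
          SPSM.unit_absorb hpa' hμ hρ (hloc m').choose_spec he2
        have hmm' : ρ (e ⊗ₜ[k] (1 : H)) (m + m') = m + m' := by
          rw [map_add, hm, hm']
        rw [wd h (m + m') e hmm', wd h m e hm, wd h m' e hm', map_add])
      (by
        intro c h m
        beta_reduce
        have hy : ρ ((hloc m).choose ⊗ₜ[k] (1 : H)) (c • m) = c • m := by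
          rw [map_smul, (hloc m).choose_spec]
        rw [wd h (c • m) (hloc m).choose hy, map_smul])
      with hχ
    refine ⟨χ, ?_, ?_, ?_⟩
    · intro h m x hx
      exact SPSM.chi_wd hpa' hμ hρ hsu hloc h m hx
    · intro m
      show ρ (SPSM.w act 1 (hloc m).choose) m = m
      rw [SPSM.w_one hpa']
      exact (hloc m).choose_spec
    · intro h g a m
      obtain ⟨e, hea⟩ := hsu a
      set x : B := (hloc m).choose with hxdef
      have hx : ρ (x ⊗ₜ[k] (1 : H)) m = m := (hloc m).choose_spec
      set Y : B ⊗[k] H := TensorProduct.map ((LinearMap.mulLeft k a).comp (act.flip x))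
        LinearMap.id (Coalgebra.comul g) with hYdef
      have h1 : ρ (a ⊗ₜ[k] (1 : H)) (χ g m) = ρ Y m := by
        show ρ (a ⊗ₜ[k] (1 : H)) (ρ (SPSM.w act g (hloc m).choose) m) = ρ Y m
        rw [← hρ, SPSM.mu_one_left hpa' hμ, SPSM.w, SPSM.map_map'', hYdef]
      have hYunit : ρ (e ⊗ₜ[k] (1 : H)) (ρ Y m) = ρ Y m := by
        rw [← hρ, SPSM.mu_one_left hpa' hμ, hYdef,
          ← SPSM.map_map'' (LinearMap.mulLeft k a) (act.flip x),
          SPSM.map_map'' (LinearMap.mulLeft k e) (LinearMap.mulLeft k a),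
          ← LinearMap.mulLeft_mul, hea,
          SPSM.map_map'' (LinearMap.mulLeft k a) (act.flip x)]
      have hχh : χ h (ρ Y m) = ρ (μ (SPSM.w act h e) Y) m := by
        show ρ (SPSM.w act h (hloc (ρ Y m)).choose) (ρ Y m) = _
        rw [wd h (ρ Y m) e hYunit, hρ]
      have hA : μ (SPSM.w act h e) Y =
          TensorProduct.lift (SPSM.q12' act a x (Coalgebra.comul g)) (Coalgebra.comul h) := by
        rw [hYdef]
        exact SPSM.claimA hpa' hμ h hea (Coalgebra.comul g)
      have claimD : ∀ zh : H ⊗[k] H,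
          TensorProduct.lift (((ρ.comp ((TensorProduct.mk k B H).flip 1)).comp
              (act.flip a)).compl₂ ((χ.flip m).comp (LinearMap.mulRight k g))) zh =
            ρ (TensorProduct.lift (SPSM.q12' act a x (Coalgebra.comul g)) zh) m := by
        intro zh
        induction zh using TensorProduct.induction_on with
        | zero => simp
        | tmul u t =>
            simp only [TensorProduct.lift.tmul, LinearMap.compl₂_apply, LinearMap.comp_apply,
              LinearMap.flip_apply, TensorProduct.mk_apply, LinearMap.mulRight_apply]
            have hχtg : χ (t * g) m = ρ (SPSM.w act (t * g) x) m := wd (t * g) m x hx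
            rw [hχtg, ← hρ, SPSM.mu_one_left hpa' hμ, SPSM.w, SPSM.map_map'',
              Bialgebra.comul_mul, ← SPSM.q12'_apply]
        | add z₁ z₂ ih₁ ih₂ => simp only [map_add, LinearMap.add_apply, ih₁, ih₂, map_add]
      rw [h1, hχh, hA, pbhRhs, sweedler]
      exact (claimD (Coalgebra.comul h)).symm
  · -- Part (2)
    intro σ χ hσ hσun hχ1 hlaw
    set ρ : (B ⊗[k] H) →ₗ[k] M →ₗ[k] M := TensorProduct.lift (LinearMap.mk₂ k
      (fun b h => (σ b).comp (χ h))
      (fun b b' h => by beta_reduce; rw [map_add, LinearMap.add_comp])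
      (fun c b h => by beta_reduce; rw [map_smul, LinearMap.smul_comp])
      (fun b h h' => by beta_reduce; rw [map_add, LinearMap.comp_add])
      (fun c b h => by beta_reduce; rw [map_smul, LinearMap.comp_smul])) with hρdef
    have hρtmul : ∀ (b : B) (h : H) (m : M), ρ (b ⊗ₜ[k] h) m = σ b (χ h m) := by
      intro b h m
      rw [hρdef, TensorProduct.lift.tmul, LinearMap.mk₂_apply, LinearMap.comp_apply]
    have hmult : ∀ (u v : B ⊗[k] H) (m : M), ρ (μ u v) m = ρ u (ρ v m) := by
      intro u v m
      induction u using TensorProduct.induction_on with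
      | zero => simp
      | add u₁ u₂ ih₁ ih₂ => simp only [map_add, LinearMap.add_apply, ih₁, ih₂]
      | tmul a h =>
        induction v using TensorProduct.induction_on with
        | zero => simp
        | add v₁ v₂ ih₁ ih₂ =>
            simp only [map_add, LinearMap.map_add, LinearMap.add_apply, ih₁, ih₂]
        | tmul b g =>
            rw [hμ, smashAux]
            have key : ∀ z : H ⊗[k] H,
                ρ (TensorProduct.map ((LinearMap.mulLeft k a).comp (act.flip b))
                  (LinearMap.mulRight k g) z) m =
                σ a (TensorProduct.lift ((σ.comp (act.flip b)).compl₂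
                  ((χ.flip m).comp (LinearMap.mulRight k g))) z) := by
              intro z
              induction z using TensorProduct.induction_on with
              | zero => simp
              | tmul u t =>
                  simp only [TensorProduct.map_tmul, TensorProduct.lift.tmul,
                    LinearMap.mk₂_apply, LinearMap.compl₂_apply, LinearMap.comp_apply,
                    LinearMap.flip_apply, LinearMap.mulRight_apply, LinearMap.mulLeft_apply]
                  rw [hρtmul, hσ]
              | add z₁ z₂ ih₁ ih₂ =>
                  simp only [map_add, LinearMap.add_apply, ih₁, ih₂]
            rw [key]
            have : TensorProduct.lift ((σ.comp (act.flip b)).compl₂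
                ((χ.flip m).comp (LinearMap.mulRight k g))) (Coalgebra.comul h) =
                pbhRhs act σ χ h g b m := rfl
            rw [this, ← hlaw, hρtmul, hρtmul]
    refine ⟨ρ, hρtmul, hmult, ?_⟩
    intro m
    have hsub : {x : M | ∃ (b : B) (m' : M), x = σ b m'} ⊆
        {x : M | ∃ p ∈ P, ∃ m' : M, x = ρ p m'} := by
      rintro _ ⟨b, m', rfl⟩
      obtain ⟨xb, hxb⟩ := hsu b
      refine ⟨b ⊗ₜ[k] (1 : H), ?_, m', ?_⟩
      · rw [hP]
        apply Submodule.subset_span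
        exact ⟨xb ⊗ₜ[k] (1 : H), b, by rw [SPSM.mu_one_one hpa' hμ, hxb]⟩
      · rw [hρtmul, hχ1]
    exact Submodule.span_mono hsub (hσun m)

end Stmt9
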